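/- arXiv:quant-ph/0307189 — 3 statements merged into one kernel-verified Lean document; each statement's English description precedes it below -/
import Mathlib

section
/- There exist no random variables X₁, X₂, Y₁, Y₂ on a common probability space, each taking values in {-1,+1}, such that P(X₁=Y₁) = 1 and P(X₁=Y₂) = P(X₂=Y₂) = P(X₂=Y₁) = 1/4. -/
open MeasureTheory

theorem no_local_hidden_variables :
    ¬ ∃ (Ω : Type) (_ : MeasurableSpace Ω) (μ : Measure Ω)
        (_ : IsProbabilityMeasure μ) (X₁ X₂ Y₁ Y₂ : Ω → ℝ),
      Measurable X₁ ∧ Measurable X₂ ∧ Measurable Y₁ ∧ Measurable Y₂ ∧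
      (∀ ω, X₁ ω = -1 ∨ X₁ ω = 1) ∧ (∀ ω, X₂ ω = -1 ∨ X₂ ω = 1) ∧
      (∀ ω, Y₁ ω = -1 ∨ Y₁ ω = 1) ∧ (∀ ω, Y₂ ω = -1 ∨ Y₂ ω = 1) ∧
      μ {ω | X₁ ω = Y₁ ω} = 1 ∧
      μ {ω | X₁ ω = Y₂ ω} = 1 / 4 ∧
      μ {ω | X₂ ω = Y₂ ω} = 1 / 4 ∧
      μ {ω | X₂ ω = Y₁ ω} = 1 / 4 := by
  rintro ⟨Ω, mΩ, μ, hμ, X₁, X₂, Y₁, Y₂, hmX₁, hmX₂, hmY₁, hmY₂,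
    hX₁, hX₂, hY₁, hY₂, h11, h12, h22, h21⟩
  have hD : MeasurableSet {ω | X₁ ω = Y₁ ω} := measurableSet_eq_fun hmX₁ hmY₁
  have hDc : μ {ω | X₁ ω = Y₁ ω}ᶜ = 0 := by
    rw [measure_compl hD (measure_ne_top μ _), h11, measure_univ, tsub_self]
  have hsub : (Set.univ : Set Ω) ⊆
      {ω | X₁ ω = Y₂ ω} ∪ ({ω | X₂ ω = Y₂ ω} ∪ ({ω | X₂ ω = Y₁ ω} ∪ {ω | X₁ ω = Y₁ ω}ᶜ)) := by
    intro ω _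
    by_cases hA : X₁ ω = Y₂ ω
    · exact Or.inl hA
    by_cases hB : X₂ ω = Y₂ ω
    · exact Or.inr (Or.inl hB)
    by_cases hC : X₂ ω = Y₁ ω
    · exact Or.inr (Or.inr (Or.inl hC))
    refine Or.inr (Or.inr (Or.inr ?_))
    simp only [Set.mem_compl_iff, Set.mem_setOf_eq]
    rcases hX₁ ω with h1 | h1 <;> rcases hX₂ ω with h2 | h2 <;>
      rcases hY₁ ω with h3 | h3 <;> rcases hY₂ ω with h4 | h4 <;>
      simp_all
  have hle : (1 : ENNReal) ≤ 1/4 + (1/4 + (1/4 + 0)) := by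
    calc (1 : ENNReal) = μ Set.univ := (measure_univ).symm
    _ ≤ μ ({ω | X₁ ω = Y₂ ω} ∪ ({ω | X₂ ω = Y₂ ω} ∪ ({ω | X₂ ω = Y₁ ω} ∪ {ω | X₁ ω = Y₁ ω}ᶜ))) :=
        measure_mono hsub
    _ ≤ μ {ω | X₁ ω = Y₂ ω} + (μ {ω | X₂ ω = Y₂ ω} + (μ {ω | X₂ ω = Y₁ ω} + μ {ω | X₁ ω = Y₁ ω}ᶜ)) := by
        refine (measure_union_le _ _).trans ?_
        gcongr
        refine (measure_union_le _ _).trans ?_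
        gcongr
        exact measure_union_le _ _
    _ = 1/4 + (1/4 + (1/4 + 0)) := by rw [h12, h22, h21, hDc]
  rw [show (1/4 + (1/4 + (1/4 + 0)) : ENNReal) = 3/4 by
    simp only [ENNReal.div_eq_inv_mul]; ring] at hle
  exact absurd hle (ENNReal.div_lt_of_lt_mul (by norm_num)).not_ge
end

section
/- Under the hypotheses of the previous statement, if additionally ρ and L are twice (respectively once more) differentiable, then tr(ρ(θ) L(θ)²) = -tr(ρ(θ) L'(θ)); that is, the expected quantum information I(θ) = tr(ρ L²) equals the expectation of the observable quantum information J(θ) = -L'(θ). -/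
open Matrix

theorem expected_equals_observable_quantum_information {d : ℕ}
    (ρ ρd L Ld : ℝ → Matrix (Fin d) (Fin d) ℂ)
    (hρderiv : ∀ θ i j, HasDerivAt (fun t => ρ t i j) (ρd θ i j) θ)
    (hLderiv : ∀ θ i j, HasDerivAt (fun t => L t i j) (Ld θ i j) θ)
    (hherm : ∀ θ, (ρ θ).IsHermitian) (hL : ∀ θ, (L θ).IsHermitian)
    (htr : ∀ θ, (ρ θ).trace = 1)
    (hsld : ∀ θ, ρd θ = (1 / 2 : ℂ) • (ρ θ * L θ + L θ * ρ θ)) :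
    ∀ θ, (ρ θ * (L θ * L θ)).trace = -(ρ θ * Ld θ).trace := by
  -- derivative of trace of ρ is trace of ρd
  have htrderiv : ∀ θ, HasDerivAt (fun t => (ρ t).trace) ((ρd θ).trace) θ := by
    intro θ
    simpa [Matrix.trace, Matrix.diag] using
      (HasDerivAt.fun_sum (fun i _ => hρderiv θ i i))
  -- trace ρd = 0
  have htrρd : ∀ θ, (ρd θ).trace = 0 := by
    intro θ
    have h1 : HasDerivAt (fun t : ℝ => (ρ t).trace) 0 θ := by
      have : (fun t : ℝ => (ρ t).trace) = fun _ => (1 : ℂ) := funext htr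
      rw [this]; exact hasDerivAt_const θ 1
    exact (htrderiv θ).unique h1
  -- trace(ρd) = trace(ρ L)
  have key : ∀ θ, (ρd θ).trace = (ρ θ * L θ).trace := by
    intro θ
    rw [hsld θ, Matrix.trace_smul, Matrix.trace_add, Matrix.trace_mul_comm (L θ) (ρ θ)]
    rw [smul_eq_mul]; ring
  have htrρL : ∀ θ, (ρ θ * L θ).trace = 0 := fun θ => (key θ).symm.trans (htrρd θ)
  intro θ
  -- derivative of t ↦ trace(ρ t * L t)
  have hg : HasDerivAt (fun t => (ρ t * L t).trace)
      ((ρd θ * L θ).trace + (ρ θ * Ld θ).trace) θ := by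
    have : HasDerivAt (fun t => ∑ i, ∑ j, ρ t i j * L t j i)
        (∑ i, ∑ j, (ρd θ i j * L θ j i + ρ θ i j * Ld θ j i)) θ := by
      apply HasDerivAt.fun_sum
      intro i _
      apply HasDerivAt.fun_sum
      intro j _
      exact (hρderiv θ i j).mul (hLderiv θ j i)
    simpa [Matrix.trace, Matrix.diag, Matrix.mul_apply, Finset.sum_add_distrib] using this
  have hg0 : HasDerivAt (fun t : ℝ => (ρ t * L t).trace) 0 θ := by
    have : (fun t : ℝ => (ρ t * L t).trace) = fun _ => (0 : ℂ) := funext htrρL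
    rw [this]; exact hasDerivAt_const θ 0
  have hsum : (ρd θ * L θ).trace + (ρ θ * Ld θ).trace = 0 := hg.unique hg0
  -- trace(ρd L) = trace(ρ L²)
  have h2 : (ρd θ * L θ).trace = (ρ θ * (L θ * L θ)).trace := by
    rw [hsld θ, Matrix.smul_mul, Matrix.trace_smul, Matrix.add_mul, Matrix.trace_add]
    rw [Matrix.trace_mul_comm (L θ * ρ θ) (L θ)]
    rw [show L θ * (L θ * ρ θ) = (L θ * L θ) * ρ θ by rw [mul_assoc],
      Matrix.trace_mul_comm (L θ * L θ) (ρ θ), mul_assoc]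
    rw [smul_eq_mul]; ring
  rw [← h2]
  linear_combination hsum
end

section
/- (Finite-outcome Braunstein–Caves inequality) Let ρ be a d×d density matrix with symmetric logarithmic derivative L (Hermitian, with ρ' = (1/2)(ρL+Lρ)), and let m₁,…,m_n be positive semidefinite Hermitian matrices summing to the identity. Set p_k = tr(ρ m_k) and ṗ_k = tr(ρ' m_k). Then Σ_{k : p_k > 0} ṗ_k² / p_k ≤ tr(L ρ L), i.e., the classical Fisher information of the measurement is bounded by the quantum Fisher information tr(ρ L²). -/
open Matrix
open scoped ComplexOrder

private lemma trace_re_nonneg_of_psd {d : ℕ} {R : Matrix (Fin d) (Fin d) ℂ}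
    (hR : R.PosSemidef) : 0 ≤ R.trace.re := by
  have h : ∀ i, 0 ≤ (R i i).re := by
    intro i
    have := hR.re_dotProduct_nonneg (Pi.single i 1)
    simpa [dotProduct, mulVec, Pi.single_apply] using this
  rw [Matrix.trace, Complex.re_sum]
  exact Finset.sum_nonneg fun i _ => h i

private lemma trace_cs {d : ℕ} (A B : Matrix (Fin d) (Fin d) ℂ) :
    ‖(Aᴴ * B).trace‖ ^ 2 ≤ (Aᴴ * A).trace.re * (Bᴴ * B).trace.re := by
  let toE : Matrix (Fin d) (Fin d) ℂ → EuclideanSpace ℂ (Fin d × Fin d) :=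
    fun X => WithLp.toLp 2 (fun p : Fin d × Fin d => X p.1 p.2)
  have h1 : ∀ X Y : Matrix (Fin d) (Fin d) ℂ,
      (inner ℂ (toE X) (toE Y) : ℂ) = (Xᴴ * Y).trace := by
    intro X Y
    simp only [PiLp.inner_apply, RCLike.inner_apply, Matrix.trace, Matrix.diag,
      Matrix.mul_apply, Matrix.conjTranspose_apply, Fintype.sum_prod_type, toE, PiLp.toLp_apply]
    rw [Finset.sum_comm]
    simp [RCLike.star_def, mul_comm]
  have h2 : ‖(inner ℂ (toE A) (toE B) : ℂ)‖ ≤ ‖toE A‖ * ‖toE B‖ := norm_inner_le_norm _ _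
  have h3 : ‖(inner ℂ (toE A) (toE B) : ℂ)‖ ^ 2 ≤ ‖toE A‖ ^ 2 * ‖toE B‖ ^ 2 := by
    rw [← mul_pow]
    exact pow_le_pow_left₀ (norm_nonneg _) h2 2
  have hA : ‖toE A‖ ^ 2 = (Aᴴ * A).trace.re := by
    rw [← inner_self_eq_norm_sq (𝕜 := ℂ), h1]; rfl
  have hB : ‖toE B‖ ^ 2 = (Bᴴ * B).trace.re := by
    rw [← inner_self_eq_norm_sq (𝕜 := ℂ), h1]; rfl
  rw [← h1, ← hA, ← hB]
  exact h3

private lemma re_sq_le_norm_sq (z : ℂ) : z.re ^ 2 ≤ ‖z‖ ^ 2 := by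
  have h : ‖z‖ ^ 2 = z.re ^ 2 + z.im ^ 2 := by
    rw [Complex.sq_norm, Complex.normSq_apply]; ring
  nlinarith [sq_nonneg z.im]

theorem braunstein_caves_information_bound {d n : ℕ}
    (ρ ρd L : Matrix (Fin d) (Fin d) ℂ)
    (hρ : ρ.PosSemidef) (htr : ρ.trace = 1)
    (hL : L.IsHermitian)
    (hsld : ρd = (1 / 2 : ℂ) • (ρ * L + L * ρ))
    (m : Fin n → Matrix (Fin d) (Fin d) ℂ)
    (hm : ∀ k, (m k).PosSemidef)
    (hsum : ∑ k, m k = 1) :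
    ∑ k ∈ Finset.univ.filter (fun k => 0 < (ρ * m k).trace.re),
        ((ρd * m k).trace.re) ^ 2 / (ρ * m k).trace.re ≤
      (L * ρ * L).trace.re := by
  classical
  obtain ⟨S, hSh, hSS⟩ : ∃ S : Matrix (Fin d) (Fin d) ℂ, Sᴴ = S ∧ S * S = ρ :=
    by open scoped MatrixOrder in exact ⟨CFC.sqrt ρ, (CFC.sqrt_nonneg ρ).posSemidef.isHermitian, CFC.sqrt_mul_sqrt_self ρ hρ.nonneg⟩
  have sqrtm : ∀ k, ∃ T : Matrix (Fin d) (Fin d) ℂ, Tᴴ = T ∧ T * T = m k :=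
    fun k => by open scoped MatrixOrder in exact ⟨CFC.sqrt (m k), (CFC.sqrt_nonneg (m k)).posSemidef.isHermitian, CFC.sqrt_mul_sqrt_self (m k) (hm k).nonneg⟩
  -- key pointwise inequality
  have key : ∀ k, ((ρd * m k).trace.re) ^ 2 ≤
      (ρ * m k).trace.re * (L * ρ * L * m k).trace.re := by
    intro k
    obtain ⟨T, hTh, hTT⟩ := sqrtm k
    -- ρd trace re
    have hadj : (ρ * L * m k)ᴴ = m k * (L * ρ) := by
      rw [conjTranspose_mul, conjTranspose_mul, hρ.isHermitian.eq, hL.eq,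
        (hm k).isHermitian.eq]
    have hconj : (L * ρ * m k).trace = star ((ρ * L * m k).trace) := by
      calc (L * ρ * m k).trace = (m k * (L * ρ)).trace := Matrix.trace_mul_comm _ _
        _ = ((ρ * L * m k)ᴴ).trace := by rw [hadj]
        _ = star ((ρ * L * m k).trace) := Matrix.trace_conjTranspose _
    have hre : (ρd * m k).trace.re = ((ρ * L * m k).trace).re := by
      rw [hsld, Matrix.smul_mul, Matrix.trace_smul, add_mul, Matrix.trace_add, hconj]
      have h2 : ∀ z : ℂ, ((1 / 2 : ℂ) • (z + star z)).re = z.re := by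
        intro z
        simp [Complex.add_conj, smul_eq_mul]
      exact h2 _
    -- identify the three traces with conjTranspose products
    have e1 : ((S * T)ᴴ * (S * L * T)).trace = (ρ * L * m k).trace := by
      have h : (S * T)ᴴ * (S * L * T) = T * (ρ * L) * T := by
        rw [conjTranspose_mul, hSh, hTh, ← hSS]
        simp only [Matrix.mul_assoc]
      rw [h, Matrix.trace_mul_cycle, hTT, Matrix.trace_mul_comm]
    have e2 : ((S * T)ᴴ * (S * T)).trace = (ρ * m k).trace := by
      have h : (S * T)ᴴ * (S * T) = T * ρ * T := by
        rw [conjTranspose_mul, hSh, hTh, ← hSS]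
        simp only [Matrix.mul_assoc]
      rw [h, Matrix.trace_mul_cycle, hTT, Matrix.trace_mul_comm]
    have e3 : ((S * L * T)ᴴ * (S * L * T)).trace = (L * ρ * L * m k).trace := by
      have h : (S * L * T)ᴴ * (S * L * T) = T * (L * ρ * L) * T := by
        rw [conjTranspose_mul, conjTranspose_mul, hSh, hTh, hL.eq, ← hSS]
        simp only [Matrix.mul_assoc]
      rw [h, Matrix.trace_mul_cycle, hTT, Matrix.trace_mul_comm]
    have hcs := trace_cs (S * T) (S * L * T)
    rw [e1, e2, e3] at hcs
    calc ((ρd * m k).trace.re) ^ 2 = ((ρ * L * m k).trace.re) ^ 2 := by rw [hre]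
      _ ≤ ‖(ρ * L * m k).trace‖ ^ 2 := re_sq_le_norm_sq _
      _ ≤ (ρ * m k).trace.re * (L * ρ * L * m k).trace.re := hcs
  -- nonnegativity of each quantum term
  have hnn : ∀ k, 0 ≤ (L * ρ * L * m k).trace.re := by
    intro k
    obtain ⟨T, hTh, hTT⟩ := sqrtm k
    have e3 : ((S * L * T)ᴴ * (S * L * T)).trace = (L * ρ * L * m k).trace := by
      have h : (S * L * T)ᴴ * (S * L * T) = T * (L * ρ * L) * T := by
        rw [conjTranspose_mul, conjTranspose_mul, hSh, hTh, hL.eq, ← hSS]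
        simp only [Matrix.mul_assoc]
      rw [h, Matrix.trace_mul_cycle, hTT, Matrix.trace_mul_comm]
    rw [← e3]
    exact trace_re_nonneg_of_psd (posSemidef_conjTranspose_mul_self _)
  calc ∑ k ∈ Finset.univ.filter (fun k => 0 < (ρ * m k).trace.re),
        ((ρd * m k).trace.re) ^ 2 / (ρ * m k).trace.re
      ≤ ∑ k ∈ Finset.univ.filter (fun k => 0 < (ρ * m k).trace.re),
          (L * ρ * L * m k).trace.re := by
        refine Finset.sum_le_sum fun k hk => ?_
        have hp : 0 < (ρ * m k).trace.re := (Finset.mem_filter.mp hk).2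
        rw [div_le_iff₀ hp]
        calc ((ρd * m k).trace.re) ^ 2
            ≤ (ρ * m k).trace.re * (L * ρ * L * m k).trace.re := key k
          _ = (L * ρ * L * m k).trace.re * (ρ * m k).trace.re := mul_comm _ _
    _ ≤ ∑ k, (L * ρ * L * m k).trace.re :=
        Finset.sum_le_sum_of_subset_of_nonneg (Finset.filter_subset _ _)
          (fun k _ _ => hnn k)
    _ = (L * ρ * L).trace.re := by
        rw [← Complex.re_sum]
        congr 1
        rw [← Matrix.trace_sum, ← Finset.mul_sum, hsum, mul_one]
end
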